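/- arXiv:0811.3075 — 2 statements merged into one kernel-verified Lean document; each statement's English description precedes it below -/
import Mathlib

section
/- For all real numbers ϱ ∈ (0,1), γ > 0 and x > 0, the double integral ∫ₓ^∞ e^u (e^u − 1)^{−(γ+1)} ( ∫_{u−x}^∞ e^z (e^z − 1)^{−(ϱ+1)} dz ) du equals [Γ(γ+ϱ) Γ(1−ϱ) / (ϱ Γ(γ+1))] · (e^x − 1)^{−γ} (1 − e^{−x})^{−ϱ}. -/
open MeasureTheory Real Set

open Filter in

lemma inner_int {ϱ : ℝ} (hϱ : 0 < ϱ) {a : ℝ} (ha : 0 < a) :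
    ∫ z in Ioi a, Real.exp z * (Real.exp z - 1) ^ (-(ϱ + 1)) = (Real.exp a - 1) ^ (-ϱ) / ϱ := by
  have hpos : ∀ z : ℝ, a ≤ z → 0 < Real.exp z - 1 := by
    intro z hz
    have : (1:ℝ) < Real.exp z := by
      rw [← Real.exp_zero]; exact Real.exp_lt_exp.2 (lt_of_lt_of_le ha hz)
    linarith
  set g : ℝ → ℝ := fun z => -((Real.exp z - 1) ^ (-ϱ) / ϱ) with hg
  have hderiv : ∀ z ∈ Ioi a, HasDerivAt g (Real.exp z * (Real.exp z - 1) ^ (-(ϱ + 1))) z := by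
    intro z hz
    have h1 : HasDerivAt (fun z => Real.exp z - 1) (Real.exp z) z :=
      (Real.hasDerivAt_exp z).sub_const 1
    have h2 := (h1.rpow_const (p := -ϱ) (Or.inl (hpos z (le_of_lt hz)).ne'))
    have h3 := (h2.div_const ϱ).neg
    refine h3.congr_deriv ?_
    rw [show -ϱ - 1 = -(ϱ + 1) by ring]
    field_simp
  have hnonneg : ∀ z ∈ Ioi a, 0 ≤ Real.exp z * (Real.exp z - 1) ^ (-(ϱ + 1)) := by
    intro z hz
    exact mul_nonneg (Real.exp_pos z).le (Real.rpow_nonneg (by linarith [hpos z hz.le]) _)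
  have hcont : ContinuousWithinAt g (Ici a) a := by
    have : ContinuousAt g a := by
      have h1 : ContinuousAt (fun z => Real.exp z - 1) a := by fun_prop
      have h3 : ContinuousAt (fun z : ℝ => (Real.exp z - 1) ^ (-ϱ)) a :=
        h1.rpow_const (Or.inl (hpos a le_rfl).ne')
      exact (h3.div_const ϱ).neg
    exact this.continuousWithinAt
  have htend : Tendsto g atTop (nhds 0) := by
    have h1 : Tendsto (fun z : ℝ => Real.exp z - 1) atTop atTop :=
      tendsto_atTop_add_const_right _ _ Real.tendsto_exp_atTop
    have h2 : Tendsto (fun y : ℝ => y ^ (-ϱ)) atTop (nhds 0) :=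
      tendsto_rpow_neg_atTop hϱ
    have := ((h2.comp h1).div_const ϱ).neg
    simpa using this
  have := integral_Ioi_of_hasDerivAt_of_nonneg hcont hderiv hnonneg htend
  rw [this]
  simp [hg]


lemma beta_real {a b : ℝ} (ha : 0 < a) (hb : 0 < b) :
    ∫ t in Ioo (0:ℝ) 1, t ^ (a - 1) * (1 - t) ^ (b - 1)
      = Gamma a * Gamma b / Gamma (a + b) := by
  have h := Complex.Gamma_mul_Gamma_eq_betaIntegral (s := (a:ℂ)) (t := (b:ℂ))
    (by simpa using ha) (by simpa using hb)
  have hB : Complex.betaIntegral (a:ℂ) (b:ℂ)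
      = ((∫ t in (0:ℝ)..1, t ^ (a - 1) * (1 - t) ^ (b - 1) : ℝ) : ℂ) := by
    rw [Complex.betaIntegral, ← intervalIntegral.integral_ofReal]
    apply intervalIntegral.integral_congr
    intro t ht
    rw [uIcc_of_le zero_le_one] at ht
    show (t:ℂ) ^ ((a:ℂ) - 1) * (1 - (t:ℂ)) ^ ((b:ℂ) - 1)
        = ((t ^ (a - 1) * (1 - t) ^ (b - 1) : ℝ) : ℂ)
    rw [show ((a:ℂ) - 1) = ((a - 1 : ℝ) : ℂ) by push_cast; ring,
      show ((b:ℂ) - 1) = ((b - 1 : ℝ) : ℂ) by push_cast; ring,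
      show ((1:ℂ) - (t:ℂ)) = ((1 - t : ℝ) : ℂ) by push_cast; ring,
      ← Complex.ofReal_cpow ht.1, ← Complex.ofReal_cpow (by linarith [ht.2] : (0:ℝ) ≤ 1 - t)]
    push_cast
    ring
  rw [hB] at h
  have hcast : Complex.Gamma (a:ℂ) * Complex.Gamma (b:ℂ) = ((Gamma a * Gamma b : ℝ) : ℂ) := by
    rw [Complex.Gamma_ofReal, Complex.Gamma_ofReal]; push_cast; ring
  have hcast2 : Complex.Gamma ((a:ℂ) + (b:ℂ)) = ((Gamma (a + b) : ℝ) : ℂ) := by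
    rw [show ((a:ℂ) + (b:ℂ)) = ((a + b : ℝ) : ℂ) by push_cast; ring, Complex.Gamma_ofReal]
  rw [hcast, hcast2, ← Complex.ofReal_mul] at h
  have h' : Gamma a * Gamma b
      = Gamma (a + b) * ∫ t in (0:ℝ)..1, t ^ (a - 1) * (1 - t) ^ (b - 1) :=
    Complex.ofReal_inj.mp h
  have hG : Gamma (a + b) ≠ 0 := (Real.Gamma_pos_of_pos (by linarith)).ne'
  rw [intervalIntegral.integral_of_le zero_le_one, integral_Ioc_eq_integral_Ioo] at h'
  field_simp at h' ⊢
  linarith [h']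

theorem statement14 (ϱ γ x : ℝ) (hϱ : 0 < ϱ) (hϱ1 : ϱ < 1) (hγ : 0 < γ) (hx : 0 < x) :
    (∫ u in Ioi x, Real.exp u * (Real.exp u - 1) ^ (-(γ + 1)) *
        ∫ z in Ioi (u - x), Real.exp z * (Real.exp z - 1) ^ (-(ϱ + 1)))
      = Gamma (γ + ϱ) * Gamma (1 - ϱ) / (ϱ * Gamma (γ + 1))
          * ((Real.exp x - 1) ^ (-γ) * (1 - Real.exp (-x)) ^ (-ϱ)) := by
  set c : ℝ := Real.exp x - 1 with hc_def
  have hc : 0 < c := by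
    have : (1:ℝ) < Real.exp x := by
      rw [← Real.exp_zero]; exact Real.exp_lt_exp.2 hx
    simp only [hc_def]; linarith
  have hex : Real.exp x = 1 + c := by rw [hc_def]; ring
  -- Step 1: compute the inner integral
  have step1 : (∫ u in Ioi x, Real.exp u * (Real.exp u - 1) ^ (-(γ + 1)) *
        ∫ z in Ioi (u - x), Real.exp z * (Real.exp z - 1) ^ (-(ϱ + 1)))
      = ∫ u in Ioi x, Real.exp u * (Real.exp u - 1) ^ (-(γ + 1)) *
          ((Real.exp (u - x) - 1) ^ (-ϱ) / ϱ) := by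
    apply setIntegral_congr_fun measurableSet_Ioi
    intro u hu
    dsimp only
    rw [inner_int hϱ (sub_pos.mpr hu)]
  -- the substitution map
  set f : ℝ → ℝ := fun t => Real.log (t + c) - Real.log t with hf_def
  have hft : ∀ t ∈ Ioo (0:ℝ) 1, Real.exp (f t) = (t + c) / t := by
    intro t ht
    rw [hf_def]
    rw [Real.exp_sub, Real.exp_log (by linarith [ht.1]), Real.exp_log ht.1]
  have hderiv : ∀ t ∈ Ioo (0:ℝ) 1,
      HasDerivWithinAt f (1 / (t + c) - 1 / t) (Ioo (0:ℝ) 1) t := by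
    intro t ht
    have h1 : HasDerivAt (fun s : ℝ => Real.log (s + c)) (1 / (t + c)) t := by
      have := ((hasDerivAt_id t).add_const c).log (by linarith [ht.1] : t + c ≠ 0)
      simpa using this
    have h2 : HasDerivAt Real.log (1 / t) t := by
      simpa [one_div] using Real.hasDerivAt_log ht.1.ne'
    exact (h1.sub h2).hasDerivWithinAt
  have hinj : InjOn f (Ioo (0:ℝ) 1) := by
    intro t1 h1 t2 h2 heq
    have e1 := hft t1 h1
    have e2 := hft t2 h2
    have he : (t1 + c) / t1 = (t2 + c) / t2 := by rw [← e1, ← e2, heq]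
    field_simp [h1.1.ne', h2.1.ne'] at he
    nlinarith [hc]
  have himg : f '' Ioo (0:ℝ) 1 = Ioi x := by
    apply Subset.antisymm
    · rintro u ⟨t, ht, rfl⟩
      have hlt : Real.exp x < Real.exp (f t) := by
        rw [hft t ht, hex, lt_div_iff₀ ht.1]
        nlinarith [ht.2, ht.1, hc]
      exact Real.exp_lt_exp.mp hlt
    · intro u hu
      have hu' : Real.exp x < Real.exp u := Real.exp_lt_exp.2 hu
      have hd : c < Real.exp u - 1 := by rw [hex] at hu'; linarith
      have hd0 : 0 < Real.exp u - 1 := lt_trans hc hd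
      refine ⟨c / (Real.exp u - 1), ⟨by positivity, by rw [div_lt_one hd0]; exact hd⟩, ?_⟩
      have ht0 : (0:ℝ) < c / (Real.exp u - 1) := by positivity
      have : Real.exp (f (c / (Real.exp u - 1))) = Real.exp u := by
        rw [hft _ ⟨ht0, by rw [div_lt_one hd0]; exact hd⟩]
        field_simp
        ring
      exact Real.exp_injective this
  rw [step1, ← himg,
    integral_image_eq_integral_abs_deriv_smul measurableSet_Ioo hderiv hinj]
  -- Step 4: pointwise computation
  have step4 : EqOn
      (fun t => |1 / (t + c) - 1 / t| • (Real.exp (f t) * (Real.exp (f t) - 1) ^ (-(γ + 1)) *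
        ((Real.exp (f t - x) - 1) ^ (-ϱ) / ϱ)))
      (fun t => (c ^ (-γ - ϱ) * (1 + c) ^ ϱ / ϱ) *
        (t ^ ((γ + ϱ) - 1) * (1 - t) ^ ((1 - ϱ) - 1)))
      (Ioo (0:ℝ) 1) := by
    intro t ht
    obtain ⟨ht0, ht1⟩ := ht
    have htc : 0 < t + c := by linarith
    have e1 : Real.exp (f t) = (t + c) / t := hft t ⟨ht0, ht1⟩
    have e2 : Real.exp (f t) - 1 = c / t := by
      rw [e1]; field_simp; ring
    have e3 : Real.exp (f t - x) - 1 = c * (1 - t) / (t * (1 + c)) := by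
      rw [Real.exp_sub, e1, hex]
      rw [div_div, div_sub_one (by positivity : t * (1 + c) ≠ 0)]
      congr 1
      ring
    have e4 : |1 / (t + c) - 1 / t| = c / (t * (t + c)) := by
      rw [abs_of_nonpos (by
        have : 1 / (t + c) ≤ 1 / t := one_div_le_one_div_of_le ht0 (by linarith)
        linarith)]
      rw [neg_sub, div_sub_div _ _ ht0.ne' htc.ne']
      congr 1
      ring
    simp only [smul_eq_mul]
    rw [e2, e3, e4, e1]
    have p1 : (c / t) ^ (-(γ + 1)) = (t ^ (γ + 1)) / (c ^ (γ + 1)) := by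
      rw [Real.rpow_neg (by positivity), Real.div_rpow hc.le ht0.le, inv_div]
    have p2 : (c * (1 - t) / (t * (1 + c))) ^ (-ϱ)
        = (t ^ ϱ * (1 + c) ^ ϱ) / (c ^ ϱ * (1 - t) ^ ϱ) := by
      have h1t : (0:ℝ) < 1 - t := by linarith
      rw [Real.rpow_neg (by positivity), Real.div_rpow
          (mul_nonneg hc.le (by linarith)) (mul_nonneg ht0.le (by linarith)),
        Real.mul_rpow hc.le (by linarith), Real.mul_rpow ht0.le (by linarith), inv_div]
    have p3 : t ^ ((γ + ϱ) - 1) = t ^ (γ + 1) * t ^ ϱ / (t * t) := by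
      rw [show (γ + ϱ) - 1 = ((γ + 1) + ϱ) - 2 by ring, Real.rpow_sub ht0,
        Real.rpow_add ht0, show (2:ℝ) = ((2:ℕ):ℝ) by norm_num, Real.rpow_natCast]
      ring_nf
    have p4 : (1 - t) ^ ((1 - ϱ) - 1) = ((1 - t) ^ ϱ)⁻¹ := by
      rw [show (1 - ϱ) - 1 = -ϱ by ring, Real.rpow_neg (by linarith)]
    have p5 : c ^ (-γ - ϱ) = c / (c ^ (γ + 1) * c ^ ϱ) := by
      rw [show -γ - ϱ = 1 - ((γ + 1) + ϱ) by ring, Real.rpow_sub hc, Real.rpow_one,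
        Real.rpow_add hc]
    rw [p1, p2, p3, p4, p5]
    have n1 : t ^ (γ + 1) ≠ 0 := (Real.rpow_pos_of_pos ht0 _).ne'
    have n2 : t ^ ϱ ≠ 0 := (Real.rpow_pos_of_pos ht0 _).ne'
    have n3 : c ^ (γ + 1) ≠ 0 := (Real.rpow_pos_of_pos hc _).ne'
    have n4 : c ^ ϱ ≠ 0 := (Real.rpow_pos_of_pos hc _).ne'
    have n5 : (1 - t) ^ ϱ ≠ 0 := (Real.rpow_pos_of_pos (by linarith) _).ne'
    have n6 : (1 + c) ^ ϱ ≠ 0 := (Real.rpow_pos_of_pos (by linarith) _).ne'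
    field_simp
  rw [setIntegral_congr_fun measurableSet_Ioo step4, MeasureTheory.integral_const_mul _ _,
    beta_real (by linarith : (0:ℝ) < γ + ϱ) (by linarith : (0:ℝ) < 1 - ϱ),
    show γ + ϱ + (1 - ϱ) = γ + 1 by ring]
  -- final algebra
  have q1 : (1 - Real.exp (-x)) = c / (1 + c) := by
    rw [Real.exp_neg, hex]
    field_simp
    ring
  have q2 : (1 - Real.exp (-x)) ^ (-ϱ) = (1 + c) ^ ϱ / c ^ ϱ := by
    rw [q1, Real.rpow_neg (by positivity), Real.div_rpow hc.le (by linarith), inv_div]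
  have q3 : c ^ (-γ - ϱ) = c ^ (-γ) / c ^ ϱ := by
    rw [show -γ - ϱ = (-γ) - ϱ by ring, Real.rpow_sub hc]
  rw [q2, q3]
  have n4 : c ^ ϱ ≠ 0 := (Real.rpow_pos_of_pos hc _).ne'
  have nG : Gamma (γ + 1) ≠ 0 := (Real.Gamma_pos_of_pos (by linarith)).ne'
  field_simp
end

section
/- For all real numbers a, c with 0 < a < 1, 0 < c < 1, and all real 0 < x < b, the triple integral ∫₀^{b−x} ∫ᵤ^b ∫₀^∞ (b−x−u)^{a−1} (v−u)^{c−1} (b−v)^a (y+b)^c (b−u)^{−(a+c)} (y+v)^{−(a+c+1)} dy dv du equals π Γ(a) Γ(c) / (sin(πa) Γ(a+c+1)); in particular the value depends on neither x nor b. -/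
open MeasureTheory Real Set

lemma realBeta {p q : ℝ} (hp : 0 < p) (hq : 0 < q) :
    ∫ t in Ioo (0:ℝ) 1, t ^ (p-1) * (1-t) ^ (q-1) = Gamma p * Gamma q / Gamma (p+q) := by
  have hG : Real.Gamma (p+q) ≠ 0 := (Real.Gamma_pos_of_pos (by linarith)).ne'
  have key := Complex.Gamma_mul_Gamma_eq_betaIntegral (s := (p:ℂ)) (t := (q:ℂ))
    (by simpa using hp) (by simpa using hq)
  rw [Complex.betaIntegral] at key
  have : (∫ (x : ℝ) in (0:ℝ)..1, (x:ℂ) ^ ((p:ℂ) - 1) * (1 - (x:ℂ)) ^ ((q:ℂ) - 1))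
      = ((∫ t in (0:ℝ)..1, t ^ (p-1) * (1-t) ^ (q-1) : ℝ) : ℂ) := by
    rw [← intervalIntegral.integral_ofReal]
    refine intervalIntegral.integral_congr (fun t ht => ?_)
    rw [uIcc_of_le (by norm_num)] at ht
    push_cast
    rw [Complex.ofReal_cpow ht.1, Complex.ofReal_cpow (by simp; linarith [ht.2] : (0:ℝ) ≤ 1 - t)]
    push_cast
    ring_nf
  rw [this] at key
  have h2 : ∫ t in Ioo (0:ℝ) 1, t ^ (p-1) * (1-t) ^ (q-1)
      = ∫ t in (0:ℝ)..1, t ^ (p-1) * (1-t) ^ (q-1) := by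
    rw [intervalIntegral.integral_of_le (by norm_num), integral_Ioc_eq_integral_Ioo]
  rw [h2]
  have := congrArg Complex.re key
  simp only [← Complex.ofReal_add, Complex.Gamma_ofReal, ← Complex.ofReal_mul,
    Complex.ofReal_re, Complex.mul_re, Complex.ofReal_im] at this
  field_simp
  linarith [this]


lemma expand_pos_mul {x : ℝ} (hx : 0 < x) (p : ℝ) : x ^ p = Real.exp (p * Real.log x) := by
  rw [Real.rpow_def_of_pos hx, mul_comm]

lemma L1 {a c b v : ℝ} (ha : 0 < a) (hc : 0 < c) (hv : 0 < v) (hvb : v < b) :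
    ∫ y in Ioi (0:ℝ), (y+b)^c * (y+v)^(-(a+c+1))
      = (b-v)^(-a) * ∫ w in Ioo (v/b) 1, w^(-(a+c+1)) * (1-w)^(a-1) := by
  have hb : 0 < b := hv.trans hvb
  have hbv : 0 < b - v := by linarith
  set f : ℝ → ℝ := fun w => (b*w - v)/(1-w) with hf
  set f' : ℝ → ℝ := fun w => (b-v)/(1-w)^2 with hf'
  have himg : f '' Ioo (v/b) 1 = Ioi (0:ℝ) := by
    ext y
    constructor
    · rintro ⟨w, hw, rfl⟩
      have h1 : v < w * b := (div_lt_iff₀ hb).mp hw.1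
      have h2 : w < 1 := hw.2
      have : (0:ℝ) < (b*w - v)/(1-w) := div_pos (by nlinarith) (by linarith)
      exact this
    · intro hy
      have hy0 : 0 < y := hy
      refine ⟨(y+v)/(y+b), ⟨?_, ?_⟩, ?_⟩
      · rw [div_lt_div_iff₀ hb (by linarith)]
        nlinarith
      · rw [div_lt_one (by linarith)]; linarith
      · show (b * ((y+v)/(y+b)) - v)/(1 - (y+v)/(y+b)) = y
        rw [div_eq_iff]
        · field_simp
          ring
        · intro h
          have : (1 - (y+v)/(y+b)) * (y+b) = 0 := by rw [h]; ring
          rw [sub_mul, div_mul_cancel₀, one_mul] at this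
          · linarith
          · linarith
  have hderiv : ∀ w ∈ Ioo (v/b) 1, HasDerivWithinAt f (f' w) (Ioo (v/b) 1) w := by
    intro w hw
    have h2 : w < 1 := hw.2
    have hne : 1 - w ≠ 0 := by intro h; linarith [hw.2]
    have h1 : HasDerivAt (fun w : ℝ => b*w - v) b w := by
      simpa using ((hasDerivAt_id w).const_mul b).sub_const v
    have h2' : HasDerivAt (fun w : ℝ => 1 - w) (-1) w := by
      simpa using (hasDerivAt_id w).const_sub 1
    have := h1.div h2' hne
    convert (show HasDerivWithinAt f _ (Ioo (v/b) 1) w from this.hasDerivWithinAt) using 1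
    show (b-v)/(1-w)^2 = _
    field_simp
    ring
  have hinj : InjOn f (Ioo (v/b) 1) := by
    intro w1 h1 w2 h2 h
    have hn1 : (1:ℝ) - w1 ≠ 0 := by intro hh; linarith [h1.2]
    have hn2 : (1:ℝ) - w2 ≠ 0 := by intro hh; linarith [h2.2]
    have h' : (b*w1 - v)/(1-w1) = (b*w2 - v)/(1-w2) := h
    rw [div_eq_div_iff hn1 hn2] at h'
    have h4 : (b - v) * (w1 - w2) = 0 := by nlinarith [h']
    rcases mul_eq_zero.mp h4 with h5 | h5
    · exact absurd h5 (by linarith)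
    · linarith [h5]
  rw [← himg, integral_image_eq_integral_abs_deriv_smul measurableSet_Ioo hderiv hinj]
  rw [← MeasureTheory.integral_const_mul]
  refine setIntegral_congr_fun measurableSet_Ioo (fun w hw => ?_)
  have hw1 : v < w * b := (div_lt_iff₀ hb).mp hw.1
  have hw2 : w < 1 := hw.2
  have hW : 0 < w := lt_trans (div_pos hv hb) hw.1
  have hO : 0 < 1 - w := by linarith
  have e1 : f w + b = (b-v)/(1-w) := by
    show (b*w - v)/(1-w) + b = _
    field_simp
    ring
  have e2 : f w + v = (w*(b-v))/(1-w) := by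
    show (b*w - v)/(1-w) + v = _
    field_simp
    ring
  have efp : f' w = (b-v)/(1-w)^2 := rfl
  rw [smul_eq_mul, efp, e1, e2, abs_of_pos (div_pos hbv (pow_pos hO 2))]
  rw [expand_pos_mul (div_pos hbv hO) c,
    expand_pos_mul (div_pos (mul_pos hW hbv) hO) (-(a+c+1)),
    expand_pos_mul hbv (-a), expand_pos_mul hW (-(a+c+1)), expand_pos_mul hO (a-1),
    Real.log_div hbv.ne' hO.ne', Real.log_div (mul_pos hW hbv).ne' hO.ne',
    Real.log_mul hW.ne' hbv.ne']
  have e3 : (b-v)/(1-w)^2 = Real.exp (Real.log (b-v) - 2 * Real.log (1-w)) := by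
    have h5 : Real.exp (2 * Real.log (1-w)) = (1-w)^2 := by
      rw [show (2:ℝ) * Real.log (1-w) = Real.log ((1-w)^2) by rw [Real.log_pow]; push_cast; ring,
        Real.exp_log (pow_pos hO 2)]
    rw [Real.exp_sub, Real.exp_log hbv, h5]
  rw [e3, ← Real.exp_add, ← Real.exp_add, ← Real.exp_add, ← Real.exp_add]
  congr 1
  ring


lemma L3 {a c b u : ℝ} (ha : 0 < a) (hc : 0 < c) (hu : 0 < u) (hub : u < b) :
    ∫ w in Ioo (u/b) 1, w^(-(a+c+1)) * (1-w)^(a-1) * (b*w - u)^c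
      = (b-u)^(a+c) * u^(-a) * ∫ ξ in Ioo (0:ℝ) 1, ξ^c * (1-ξ)^(a-1) := by
  have hb : 0 < b := hu.trans hub
  have hbu : 0 < b - u := by linarith
  set g : ℝ → ℝ := fun ξ => u/(b - ξ*(b-u)) with hg
  set g' : ℝ → ℝ := fun ξ => u*(b-u)/(b - ξ*(b-u))^2 with hg'
  have hD : ∀ ξ ∈ Ioo (0:ℝ) 1, u < b - ξ*(b-u) ∧ b - ξ*(b-u) < b := by
    intro ξ hξ
    constructor
    · nlinarith [hξ.2]
    · nlinarith [hξ.1]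
  have himg : g '' Ioo (0:ℝ) 1 = Ioo (u/b) 1 := by
    ext w
    constructor
    · rintro ⟨ξ, hξ, rfl⟩
      obtain ⟨hD1, hD2⟩ := hD ξ hξ
      have hDpos : 0 < b - ξ*(b-u) := by linarith
      constructor
      · show u/b < u/(b - ξ*(b-u))
        apply div_lt_div_of_pos_left hu hDpos hD2
      · show u/(b - ξ*(b-u)) < 1
        rw [div_lt_one hDpos]; exact hD1
    · intro hw
      have hw1 : u < w * b := (div_lt_iff₀ hb).mp hw.1
      have hw2 : w < 1 := hw.2
      have hW : 0 < w := lt_trans (div_pos hu hb) hw.1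
      refine ⟨(b*w - u)/(w*(b-u)), ⟨?_, ?_⟩, ?_⟩
      · exact div_pos (by nlinarith) (mul_pos hW hbu)
      · rw [div_lt_one (mul_pos hW hbu)]; nlinarith
      · show u/(b - (b*w - u)/(w*(b-u))*(b-u)) = w
        rw [div_eq_iff, mul_comm]
        · field_simp
          ring
        · have : b - (b*w - u)/(w*(b-u))*(b-u) = u/w := by
            field_simp
            ring
          rw [this]
          positivity
  have hderiv : ∀ ξ ∈ Ioo (0:ℝ) 1, HasDerivWithinAt g (g' ξ) (Ioo (0:ℝ) 1) ξ := by
    intro ξ hξ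
    have hDpos : 0 < b - ξ*(b-u) := by linarith [(hD ξ hξ).1]
    have h1 : HasDerivAt (fun ξ : ℝ => u) 0 ξ := hasDerivAt_const ξ u
    have h2 : HasDerivAt (fun ξ : ℝ => b - ξ*(b-u)) (-(b-u)) ξ := by
      simpa using (((hasDerivAt_id ξ).mul_const (b-u)).const_sub b)
    have := h1.div h2 hDpos.ne'
    convert (show HasDerivWithinAt g _ (Ioo (0:ℝ) 1) ξ from this.hasDerivWithinAt) using 1
    show u*(b-u)/(b - ξ*(b-u))^2 = _
    field_simp
    ring
  have hinj : InjOn g (Ioo (0:ℝ) 1) := by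
    intro x1 h1 x2 h2 h
    have hd1 : 0 < b - x1*(b-u) := by linarith [(hD x1 h1).1]
    have hd2 : 0 < b - x2*(b-u) := by linarith [(hD x2 h2).1]
    have h' : u/(b - x1*(b-u)) = u/(b - x2*(b-u)) := h
    rw [div_eq_div_iff hd1.ne' hd2.ne'] at h'
    have h4 : x1 * (b-u) = x2 * (b-u) := by nlinarith [h']
    have := mul_right_cancel₀ hbu.ne' h4
    exact this
  rw [← himg, integral_image_eq_integral_abs_deriv_smul measurableSet_Ioo hderiv hinj,
    ← MeasureTheory.integral_const_mul]
  refine setIntegral_congr_fun measurableSet_Ioo (fun ξ hξ => ?_)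
  obtain ⟨hD1, hD2⟩ := hD ξ hξ
  have hDpos : 0 < b - ξ*(b-u) := by linarith
  have hX : 0 < ξ := hξ.1
  have hXO : 0 < 1 - ξ := by linarith [hξ.2]
  set D := b - ξ*(b-u) with hDdef
  have e1 : g ξ = u/D := rfl
  have e2 : 1 - g ξ = (1-ξ)*(b-u)/D := by
    show 1 - u/D = _
    field_simp
    rw [hDdef]; ring
  have e3 : b * g ξ - u = u*ξ*(b-u)/D := by
    show b * (u/D) - u = _
    field_simp
    rw [hDdef]; ring
  have egp : g' ξ = u*(b-u)/D^2 := rfl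
  rw [smul_eq_mul, egp, e1, e2, e3, abs_of_pos (div_pos (mul_pos hu hbu) (pow_pos hDpos 2))]
  have hq1 : (0:ℝ) < u/D := div_pos hu hDpos
  have hq2 : (0:ℝ) < (1-ξ)*(b-u)/D := div_pos (mul_pos hXO hbu) hDpos
  have hq3 : (0:ℝ) < u*ξ*(b-u)/D := div_pos (mul_pos (mul_pos hu hX) hbu) hDpos
  rw [expand_pos_mul hq1 (-(a+c+1)), expand_pos_mul hq2 (a-1), expand_pos_mul hq3 c,
    expand_pos_mul hbu (a+c), expand_pos_mul hu (-a), expand_pos_mul hX c,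
    expand_pos_mul hXO (a-1),
    Real.log_div hu.ne' hDpos.ne',
    Real.log_div (mul_pos hXO hbu).ne' hDpos.ne',
    Real.log_div (mul_pos (mul_pos hu hX) hbu).ne' hDpos.ne',
    Real.log_mul hXO.ne' hbu.ne',
    Real.log_mul (mul_pos hu hX).ne' hbu.ne',
    Real.log_mul hu.ne' hX.ne']
  have e4 : u*(b-u)/D^2 = Real.exp (Real.log u + Real.log (b-u) - 2 * Real.log D) := by
    have h5 : Real.exp (2 * Real.log D) = D^2 := by
      rw [show (2:ℝ) * Real.log D = Real.log (D^2) by rw [Real.log_pow]; push_cast; ring,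
        Real.exp_log (pow_pos hDpos 2)]
    rw [Real.exp_sub, Real.exp_add, Real.exp_log hu, Real.exp_log hbu, h5]
  rw [e4]
  simp only [← Real.exp_add]
  congr 1
  ring

lemma L4 {a B : ℝ} (ha : 0 < a) (ha1 : a < 1) (hB : 0 < B) :
    ∫ u in Ioo (0:ℝ) B, (B-u)^(a-1) * u^(-a) = Gamma a * Gamma (1-a) := by
  have h1a : 0 < 1 - a := by linarith
  set g : ℝ → ℝ := fun t => B*t with hg
  have himg : g '' Ioo (0:ℝ) 1 = Ioo (0:ℝ) B := by
    ext w
    constructor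
    · rintro ⟨t, ht, rfl⟩
      exact ⟨mul_pos hB ht.1, by have := mul_lt_mul_of_pos_left ht.2 hB; simpa using this⟩
    · intro hw
      exact ⟨w/B, ⟨div_pos hw.1 hB, (div_lt_one hB).mpr hw.2⟩, by
        show B * (w/B) = w
        field_simp⟩
  have hderiv : ∀ t ∈ Ioo (0:ℝ) 1, HasDerivWithinAt g B (Ioo (0:ℝ) 1) t := by
    intro t ht
    simpa using ((hasDerivAt_id t).const_mul B).hasDerivWithinAt
  have hinj : InjOn g (Ioo (0:ℝ) 1) := fun x1 _ x2 _ h => mul_left_cancel₀ hB.ne' h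
  rw [← himg, integral_image_eq_integral_abs_deriv_smul measurableSet_Ioo hderiv hinj]
  have : ∫ t in Ioo (0:ℝ) 1, |B| • ((B - g t)^(a-1) * (g t)^(-a))
      = ∫ t in Ioo (0:ℝ) 1, t^((1-a)-1) * (1-t)^(a-1) := by
    refine setIntegral_congr_fun measurableSet_Ioo (fun t ht => ?_)
    have ht1 : 0 < t := ht.1
    have ht2 : 0 < 1 - t := by linarith [ht.2]
    have e1 : B - g t = B*(1-t) := by show B - B*t = _; ring
    have e2 : g t = B*t := rfl
    rw [smul_eq_mul, e1, e2, abs_of_pos hB, Real.mul_rpow hB.le ht2.le,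
      Real.mul_rpow hB.le ht1.le, show (1-a)-1 = -a by ring]
    rw [show B * (B ^ (a - 1) * (1 - t) ^ (a - 1) * (B ^ (-a) * t ^ (-a)))
        = (B ^ (a-1) * B^(-a) * B) * (t^(-a) * (1-t)^(a-1)) by ring,
      ← Real.rpow_add hB, show a-1 + -a = -1 by ring, Real.rpow_neg_one,
      inv_mul_cancel₀ hB.ne', one_mul]
  rw [this, realBeta h1a ha, show 1 - a + a = 1 by ring, Real.Gamma_one]
  ring


-- integrable (1-w)^(a-1) on Ioo t 1
lemma Ia {a t : ℝ} (ha : 0 < a) :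
    IntegrableOn (fun w => (1-w)^(a-1)) (Ioo t 1) := by
  have h1 : IntervalIntegrable (fun x : ℝ => x ^ (a-1)) volume 0 (1-t) :=
    intervalIntegral.intervalIntegrable_rpow' (by linarith)
  have h2 := h1.comp_sub_left 1
  simp only [sub_zero, sub_sub_cancel] at h2
  rcases le_or_gt 1 t with h | h
  · rw [Ioo_eq_empty (by linarith)]; simp
  · exact h2.symm.1.mono_set Ioo_subset_Ioc_self

-- integrable w^(-(a+c+1))*(1-w)^(a-1) on Ioo s 1 for 0 < s
lemma Ib {a c s : ℝ} (ha : 0 < a) (hc : 0 < c) (hs : 0 < s) :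
    IntegrableOn (fun w => w^(-(a+c+1)) * (1-w)^(a-1)) (Ioo s 1) := by
  refine Integrable.mono' ((Ia ha (t := s)).const_mul (s^(-(a+c+1)))) ((by fun_prop : Measurable fun w : ℝ => w^(-(a+c+1)) * (1-w)^(a-1)).aestronglyMeasurable) ?_
  rw [ae_restrict_iff' measurableSet_Ioo]
  refine ae_of_all _ (fun w hw => ?_)
  have hw1 : 0 < w := hs.trans hw.1
  have hw2 : 0 < 1 - w := by linarith [hw.2]
  rw [Real.norm_of_nonneg (mul_nonneg (Real.rpow_nonneg hw1.le _) (Real.rpow_nonneg hw2.le _))]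
  apply mul_le_mul_of_nonneg_right _ (Real.rpow_nonneg hw2.le _)
  rw [Real.rpow_neg hw1.le, Real.rpow_neg hs.le]
  exact inv_anti₀ (Real.rpow_pos_of_pos hs _) (Real.rpow_le_rpow hs.le hw.1.le (by linarith))

-- integrable (v-u)^(c-1) on Ioo u s
lemma Ic {c u s : ℝ} (hc : 0 < c) :
    IntegrableOn (fun v => (v-u)^(c-1)) (Ioo u s) := by
  have h1 : IntervalIntegrable (fun x : ℝ => x ^ (c-1)) volume 0 (s-u) :=
    intervalIntegral.intervalIntegrable_rpow' (by linarith)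
  have h2 := h1.comp_sub_right u
  simp only [zero_add, sub_add_cancel] at h2
  rcases le_or_gt s u with h | h
  · rw [Ioo_eq_empty (by linarith)]; simp
  · exact h2.1.mono_set Ioo_subset_Ioc_self

lemma powint {c u s : ℝ} (hc : 0 < c) (hus : u < s) :
    ∫ v in Ioo u s, (v-u)^(c-1) = (s-u)^c / c := by
  rw [← integral_Ioc_eq_integral_Ioo, ← intervalIntegral.integral_of_le hus.le,
    intervalIntegral.integral_comp_sub_right (fun x => x ^ (c-1)) u, sub_self,
    integral_rpow (Or.inl (by linarith)), sub_add_cancel,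
    Real.zero_rpow (by positivity), sub_zero]

lemma L2 {a c b u : ℝ} (ha : 0 < a) (hc : 0 < c) (hu : 0 < u) (hub : u < b) :
    ∫ v in Ioo u b, (v-u)^(c-1) * (∫ w in Ioo (v/b) 1, w^(-(a+c+1)) * (1-w)^(a-1))
      = (1/c) * ∫ w in Ioo (u/b) 1, w^(-(a+c+1)) * (1-w)^(a-1) * (b*w - u) ^ c := by
  have hb : 0 < b := hu.trans hub
  set φ : ℝ → ℝ := fun w => w^(-(a+c+1)) * (1-w)^(a-1) with hφ
  have hφnn : ∀ w ∈ Ioo (0:ℝ) 1, 0 ≤ φ w := fun w hw =>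
    mul_nonneg (Real.rpow_nonneg hw.1.le _) (Real.rpow_nonneg (by linarith [hw.2]) _)
  set F : ℝ → ℝ → ℝ :=
    fun v w => Set.indicator {w : ℝ | v < b*w} (fun w => (v-u)^(c-1) * φ w) w with hF
  have hsetv : ∀ v : ℝ, {w : ℝ | v < b*w} = Ioi (v/b) := by
    intro v; ext w; simp only [mem_setOf_eq, mem_Ioi]
    rw [div_lt_iff₀ hb, mul_comm]
  have hcap : ∀ s : ℝ, 0 < s → s < 1 → Ioi s ∩ Ioo (0:ℝ) 1 = Ioo s 1 := by
    intro s h1 h2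
    ext w; constructor
    · rintro ⟨hw1, hw2⟩; exact ⟨hw1, hw2.2⟩
    · rintro ⟨hw1, hw2⟩; exact ⟨hw1, ⟨h1.trans hw1, hw2⟩⟩
  have hvb' : ∀ v ∈ Ioo u b, 0 < v/b ∧ v/b < 1 := fun v hv =>
    ⟨div_pos (hu.trans hv.1) hb, (div_lt_one hb).mpr hv.2⟩
  have hFv : ∀ v ∈ Ioo u b, ∫ w in Ioo (0:ℝ) 1, F v w
      = (v-u)^(c-1) * ∫ w in Ioo (v/b) 1, φ w := by
    intro v hv
    rw [hF, setIntegral_indicator (by rw [hsetv]; exact measurableSet_Ioi),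
      show Ioo (0:ℝ) 1 ∩ {w : ℝ | v < b*w} = Ioo (v/b) 1 by
        rw [hsetv, inter_comm, hcap _ (hvb' v hv).1 (hvb' v hv).2]]
    exact MeasureTheory.integral_const_mul _ _
  have hsec : ∀ v ∈ Ioo u b, Integrable (F v) (volume.restrict (Ioo (0:ℝ) 1)) := by
    intro v hv
    have hFveq : F v = Set.indicator (Ioi (v/b)) (fun w => (v-u)^(c-1) * φ w) := by
      funext w
      show Set.indicator {w : ℝ | v < b*w} _ w = _
      rw [hsetv]
    rw [hFveq, integrable_indicator_iff measurableSet_Ioi, IntegrableOn,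
      Measure.restrict_restrict measurableSet_Ioi, hcap _ (hvb' v hv).1 (hvb' v hv).2]
    exact (Ib ha hc (hvb' v hv).1).const_mul _
  have hS : MeasurableSet {p : ℝ×ℝ | p.1 < b * p.2} :=
    measurableSet_lt measurable_fst (by fun_prop)
  have hFm : AEStronglyMeasurable (Function.uncurry F)
      ((volume.restrict (Ioo u b)).prod (volume.restrict (Ioo (0:ℝ) 1))) := by
    have huncurry : Function.uncurry F
        = Set.indicator {p : ℝ×ℝ | p.1 < b*p.2} (fun p => (p.1-u)^(c-1) * φ p.2) := by
      funext p
      simp only [Function.uncurry, hF, Set.indicator_apply, mem_setOf_eq]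
    rw [huncurry]
    exact ((by fun_prop : Measurable fun p : ℝ×ℝ => (p.1-u)^(c-1) * φ p.2).indicator
      hS).aestronglyMeasurable
  set H0 : ℝ := ∫ w in Ioo (u/b) 1, φ w with hH0
  have hIb0 : IntegrableOn φ (Ioo (u/b) 1) := Ib ha hc (div_pos hu hb)
  have hHnn : ∀ v ∈ Ioo u b, 0 ≤ ∫ w in Ioo (v/b) 1, φ w := fun v hv =>
    setIntegral_nonneg measurableSet_Ioo (fun w hw =>
      hφnn w ⟨(hvb' v hv).1.trans hw.1, hw.2⟩)
  have hHle : ∀ v ∈ Ioo u b, (∫ w in Ioo (v/b) 1, φ w) ≤ H0 := by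
    intro v hv
    refine setIntegral_mono_set hIb0 ?_ ?_
    · refine (ae_restrict_iff' measurableSet_Ioo).mpr (ae_of_all _ (fun w hw => ?_))
      simpa using hφnn w ⟨(div_pos hu hb).trans hw.1, hw.2⟩
    · refine HasSubset.Subset.eventuallyLE (Ioo_subset_Ioo_left ?_)
      gcongr
      exact hv.1.le
  have hnormint : Integrable (fun v => ∫ w in Ioo (0:ℝ) 1, ‖F v w‖)
      (volume.restrict (Ioo u b)) := by
    refine Integrable.mono' ((Ic hc).const_mul H0) hFm.norm.integral_prod_right' ?_
    rw [ae_restrict_iff' measurableSet_Ioo]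
    refine ae_of_all _ (fun v hv => ?_)
    have heq : ∫ w in Ioo (0:ℝ) 1, ‖F v w‖ = ∫ w in Ioo (0:ℝ) 1, F v w := by
      refine setIntegral_congr_fun measurableSet_Ioo (fun w hw => ?_)
      refine Real.norm_of_nonneg ?_
      rw [hF]
      simp only [Set.indicator_apply]
      split_ifs with hmem
      · exact mul_nonneg (Real.rpow_nonneg (by linarith [hv.1] : (0:ℝ) ≤ v - u) _) (hφnn w hw)
      · exact le_refl 0
    rw [heq, hFv v hv, Real.norm_of_nonneg (mul_nonneg
      (Real.rpow_nonneg (by linarith [hv.1] : (0:ℝ) ≤ v - u) _) (hHnn v hv)), mul_comm]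
    exact mul_le_mul_of_nonneg_right (hHle v hv)
      (Real.rpow_nonneg (by linarith [hv.1] : (0:ℝ) ≤ v - u) _)
  have hprod : Integrable (Function.uncurry F)
      ((volume.restrict (Ioo u b)).prod (volume.restrict (Ioo (0:ℝ) 1))) := by
    rw [MeasureTheory.integrable_prod_iff hFm]
    constructor
    · rw [ae_restrict_iff' measurableSet_Ioo]
      exact ae_of_all _ (fun v hv => hsec v hv)
    · exact hnormint
  have swap := MeasureTheory.integral_integral_swap hprod
  calc ∫ v in Ioo u b, (v-u)^(c-1) * (∫ w in Ioo (v/b) 1, φ w)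
      = ∫ v in Ioo u b, ∫ w in Ioo (0:ℝ) 1, F v w := by
        refine setIntegral_congr_fun measurableSet_Ioo (fun v hv => ?_)
        rw [hFv v hv]
    _ = ∫ w in Ioo (0:ℝ) 1, ∫ v in Ioo u b, F v w := swap
    _ = ∫ w in Ioo (0:ℝ) 1, Set.indicator (Ioi (u/b)) (fun w => φ w * (b*w-u)^c / c) w := by
        refine setIntegral_congr_fun measurableSet_Ioo (fun w hw => ?_)
        have hFvw : (fun v => F v w) = Set.indicator (Iio (b*w)) (fun v => (v-u)^(c-1) * φ w) := by
          funext v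
          simp only [hF, Set.indicator_apply, mem_setOf_eq, mem_Iio]
        rw [hFvw, setIntegral_indicator measurableSet_Iio]
        by_cases hcase : u/b < w
        · have hubw : u < b*w := by rw [mul_comm]; exact (div_lt_iff₀ hb).mp hcase
          have hset2 : Ioo u b ∩ Iio (b*w) = Ioo u (b*w) := by
            ext v; constructor
            · rintro ⟨⟨h1,_⟩,h3⟩; exact ⟨h1, h3⟩
            · rintro ⟨h1, h2⟩
              exact ⟨⟨h1, lt_of_lt_of_le h2 (by nlinarith [hw.2] : b*w ≤ b)⟩, h2⟩
          rw [hset2, MeasureTheory.integral_mul_const, powint hc hubw,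
            Set.indicator_of_mem (mem_Ioi.mpr hcase)]
          ring
        · have hubw : b*w ≤ u := by
            rw [mul_comm]
            by_contra hcon
            push_neg at hcon
            exact hcase ((div_lt_iff₀ hb).mpr hcon)
          have hset2 : Ioo u b ∩ Iio (b*w) = ∅ := by
            ext v
            simp only [mem_inter_iff, mem_Ioo, mem_Iio, mem_empty_iff_false, iff_false]
            rintro ⟨⟨h1,_⟩,h3⟩
            linarith
          rw [hset2, Set.indicator_of_notMem (by simpa using hcase)]
          simp
    _ = ∫ w in Ioo (0:ℝ) 1 ∩ Ioi (u/b), φ w * (b*w-u)^c / c :=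
        setIntegral_indicator measurableSet_Ioi
    _ = ∫ w in Ioo (u/b) 1, φ w * (b*w-u)^c / c := by
        rw [inter_comm, hcap _ (div_pos hu hb) ((div_lt_one hb).mpr hub)]
    _ = (1/c) * ∫ w in Ioo (u/b) 1, φ w * (b*w - u) ^ c := by
        rw [← MeasureTheory.integral_const_mul]
        refine setIntegral_congr_fun measurableSet_Ioo (fun w hw => ?_)
        ring


theorem statement15 (a c x b : ℝ) (ha : 0 < a) (ha1 : a < 1) (hc : 0 < c) (hc1 : c < 1)
    (hx : 0 < x) (hxb : x < b) :
    (∫ u in Ioo (0:ℝ) (b - x), ∫ v in Ioo u b, ∫ y in Ioi (0:ℝ),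
        (b - x - u) ^ (a - 1) * (v - u) ^ (c - 1) * (b - v) ^ a * (y + b) ^ c
          * (b - u) ^ (-(a + c)) * (y + v) ^ (-(a + c + 1)))
      = π * Gamma a * Gamma c / (Real.sin (π * a) * Gamma (a + c + 1)) := by
  have hb : 0 < b := hx.trans hxb
  have hB : 0 < b - x := by linarith
  set J : ℝ := ∫ ξ in Ioo (0:ℝ) 1, ξ^c * (1-ξ)^(a-1) with hJ
  have hJval : J = Gamma (c+1) * Gamma a / Gamma (a+c+1) := by
    rw [hJ, show Gamma (a+c+1) = Gamma ((c+1)+a) from by rw [show (c+1)+a = a+c+1 from by ring],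
      ← realBeta (by linarith : (0:ℝ) < c+1) ha]
    refine setIntegral_congr_fun measurableSet_Ioo (fun t ht => ?_)
    rw [show c+1-1 = c from by ring]
  have key : ∀ u ∈ Ioo (0:ℝ) (b-x),
      (∫ v in Ioo u b, ∫ y in Ioi (0:ℝ),
        (b - x - u) ^ (a - 1) * (v - u) ^ (c - 1) * (b - v) ^ a * (y + b) ^ c
          * (b - u) ^ (-(a + c)) * (y + v) ^ (-(a + c + 1)))
      = (J/c) * ((b-x-u)^(a-1) * u^(-a)) := by
    intro u hu
    have hu0 : 0 < u := hu.1
    have hub : u < b := by linarith [hu.2]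
    have hbu : 0 < b - u := by linarith
    have step1 : ∀ v ∈ Ioo u b,
        (∫ y in Ioi (0:ℝ), (b - x - u) ^ (a - 1) * (v - u) ^ (c - 1) * (b - v) ^ a * (y + b) ^ c
          * (b - u) ^ (-(a + c)) * (y + v) ^ (-(a + c + 1)))
        = ((b-x-u)^(a-1) * (b-u)^(-(a+c)))
          * ((v-u)^(c-1) * (∫ w in Ioo (v/b) 1, w^(-(a+c+1)) * (1-w)^(a-1))) := by
      intro v hv
      have hv0 : 0 < v := hu0.trans hv.1
      have hvb : v < b := hv.2
      have hbv : 0 < b - v := by linarith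
      have e0 : (∫ y in Ioi (0:ℝ), (b - x - u) ^ (a - 1) * (v - u) ^ (c - 1) * (b - v) ^ a
            * (y + b) ^ c * (b - u) ^ (-(a + c)) * (y + v) ^ (-(a + c + 1)))
          = ∫ y in Ioi (0:ℝ), ((b - x - u) ^ (a - 1) * (v - u) ^ (c - 1) * (b - v) ^ a
            * (b - u) ^ (-(a + c))) * ((y + b) ^ c * (y + v) ^ (-(a + c + 1))) :=
        setIntegral_congr_fun measurableSet_Ioi (fun y _ => by ring)
      rw [e0, MeasureTheory.integral_const_mul, L1 ha hc hv0 hvb,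
        show (b - x - u) ^ (a - 1) * (v - u) ^ (c - 1) * (b - v) ^ a * (b - u) ^ (-(a + c))
            * ((b-v)^(-a) * ∫ w in Ioo (v/b) 1, w^(-(a+c+1)) * (1-w)^(a-1))
          = ((b-v)^a * (b-v)^(-a)) * (((b-x-u)^(a-1) * (b-u)^(-(a+c)))
            * ((v-u)^(c-1) * (∫ w in Ioo (v/b) 1, w^(-(a+c+1)) * (1-w)^(a-1)))) from by ring,
        ← Real.rpow_add hbv, add_neg_cancel, Real.rpow_zero, one_mul]
    rw [setIntegral_congr_fun measurableSet_Ioo step1, MeasureTheory.integral_const_mul,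
      L2 ha hc hu0 hub, L3 ha hc hu0 hub,
      show (b-x-u)^(a-1) * (b-u)^(-(a+c)) * (1/c * ((b-u)^(a+c) * u^(-a) * J))
        = ((b-u)^(-(a+c)) * (b-u)^(a+c)) * ((J/c) * ((b-x-u)^(a-1) * u^(-a))) from by ring,
      ← Real.rpow_add hbu, neg_add_cancel, Real.rpow_zero, one_mul]
  rw [setIntegral_congr_fun measurableSet_Ioo key, MeasureTheory.integral_const_mul,
    L4 ha ha1 hB, hJval, Real.Gamma_add_one hc.ne', Real.Gamma_mul_Gamma_one_sub a]
  have hsin : Real.sin (π * a) ≠ 0 := by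
    refine (Real.sin_pos_of_pos_of_lt_pi ?_ ?_).ne'
    · positivity
    · nlinarith [Real.pi_pos]
  have hGpos : Gamma (a+c+1) ≠ 0 := (Real.Gamma_pos_of_pos (by linarith)).ne'
  field_simp
end
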